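/- For every integer σ ≥ 2, the dihedral group D_{2(σ−1)} = ⟨x, y | x^{2(σ−1)}, y², yxyx⟩ of order 4(σ − 1) admits a (0; 2, 2, 2, 2, 2)-generating vector, namely (xy, xy, y, yx^{σ−1}, x^{σ−1}); consequently (0; 2, 2, 2, 2, 2) is an actual signature for every genus σ ≥ 2. -/

import Mathlib

/-- The Riemann–Hurwitz formula `σ - 1 = N (h - 1 + (1/2) Σ (1 - 1/mᵢ))`
as an equality of rational numbers. -/
def RHFormula (σ N h : ℕ) (m : List ℕ) : Prop :=
  (σ : ℚ) - 1 = (N : ℚ) * ((h : ℚ) - 1 + (1 / 2) * (m.map (fun x => 1 - 1 / (x : ℚ))).sum)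

/-- `(h; m₁, …, m_r)` is a potential signature for genus `σ`: each `mᵢ ≥ 2` and there is
a positive integer `N` with `mᵢ ∣ N` for all `i` satisfying the Riemann–Hurwitz formula. -/
def IsPotentialSignature (σ h : ℕ) (m : List ℕ) : Prop :=
  (∀ x ∈ m, 2 ≤ x) ∧ ∃ N : ℕ, 0 < N ∧ (∀ x ∈ m, x ∣ N) ∧ RHFormula σ N h m

/-- The set `P_σ` of potential signatures for genus `σ`, as a set of pairs `(h, [m₁, …, m_r])`. -/
def PotSig (σ : ℕ) : Set (ℕ × List ℕ) := {p | IsPotentialSignature σ p.1 p.2}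
open scoped commutatorElement
/-- `(a, b, c)` is an `(h; m₁, …, m_r)`-generating vector for the group `G`:
the elements generate `G`, the order of `cᵢ` is `mᵢ`, and
`∏ ⁅aᵢ, bᵢ⁆ · ∏ cⱼ = 1`. -/
def IsGenVector (G : Type*) [Group G] (h : ℕ) (m : List ℕ)
    (a b : Fin h → G) (c : Fin m.length → G) : Prop :=
  Subgroup.closure (Set.range a ∪ Set.range b ∪ Set.range c) = ⊤ ∧
  (∀ i : Fin m.length, orderOf (c i) = m.get i) ∧
  (List.ofFn fun i => ⁅a i, b i⁆).prod * (List.ofFn c).prod = 1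

/-- `G` admits an `(h; m₁, …, m_r)`-generating vector. -/
def HasGenVector (G : Type*) [Group G] (h : ℕ) (m : List ℕ) : Prop :=
  ∃ (a b : Fin h → G) (c : Fin m.length → G), IsGenVector G h m a b c

/-- `(h; m₁, …, m_r)` (with all `mᵢ ≥ 2`) is an actual signature for genus `σ`: some finite
group `G` admits an `(h; m₁, …, m_r)`-generating vector and `N = |G|` satisfies the
Riemann–Hurwitz formula for genus `σ`. -/
def IsActualSignature (σ h : ℕ) (m : List ℕ) : Prop :=
  (∀ x ∈ m, 2 ≤ x) ∧
  ∃ (G : Type) (_ : Group G) (_ : Fintype G),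
    HasGenVector G h m ∧ RHFormula σ (Fintype.card G) h m

open DihedralGroup in
lemma dihedral_aux (σ : ℕ) (hσ : 2 ≤ σ) :
    IsGenVector (DihedralGroup (2 * (σ - 1))) 0 [2, 2, 2, 2, 2] ![] ![]
      ![DihedralGroup.r 1 * DihedralGroup.sr 0,
        DihedralGroup.r 1 * DihedralGroup.sr 0,
        DihedralGroup.sr 0,
        DihedralGroup.sr 0 * (DihedralGroup.r 1) ^ (σ - 1),
        (DihedralGroup.r 1) ^ (σ - 1)] := by
  set n := 2 * (σ - 1) with hn
  have hs1 : 1 ≤ σ - 1 := by omega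
  have hn2 : 2 ≤ n := by omega
  haveI : NeZero n := ⟨by omega⟩
  have hr : (r 1 : DihedralGroup n) ^ (σ - 1) = r ((σ - 1 : ℕ) : ZMod n) := r_one_pow _
  have hcast : ((σ - 1 : ℕ) : ZMod n) ≠ 0 := by
    rw [Ne, ZMod.natCast_eq_zero_iff]
    intro h
    have := Nat.le_of_dvd (by omega) h
    omega
  have hsum : ((σ - 1 : ℕ) : ZMod n) + ((σ - 1 : ℕ) : ZMod n) = 0 := by
    rw [← Nat.cast_add]
    have : (σ - 1) + (σ - 1) = n := by omega
    rw [this, ZMod.natCast_self]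
  refine ⟨?_, ?_, ?_⟩
  · rw [eq_top_iff]
    intro g _
    set S : Set (DihedralGroup n) :=
      Set.range (![] : Fin 0 → DihedralGroup n) ∪ Set.range (![] : Fin 0 → DihedralGroup n) ∪
      Set.range (![DihedralGroup.r 1 * DihedralGroup.sr 0,
        DihedralGroup.r 1 * DihedralGroup.sr 0,
        DihedralGroup.sr 0,
        DihedralGroup.sr 0 * (DihedralGroup.r 1) ^ (σ - 1),
        (DihedralGroup.r 1) ^ (σ - 1)] :
        Fin ([2,2,2,2,2] : List ℕ).length → DihedralGroup n) with hS
    have h1 : (r 1 * sr 0 : DihedralGroup n) ∈ Subgroup.closure S :=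
      Subgroup.subset_closure (by refine Or.inr ⟨⟨0, by norm_num⟩, ?_⟩; rfl)
    have h2 : (sr 0 : DihedralGroup n) ∈ Subgroup.closure S :=
      Subgroup.subset_closure (by refine Or.inr ⟨⟨2, by norm_num⟩, ?_⟩; rfl)
    have hr1 : (r 1 : DihedralGroup n) ∈ Subgroup.closure S := by
      have h3 : (r 1 : DihedralGroup n) = (r 1 * sr 0) * sr 0 := by
        rw [mul_assoc, sr_mul_self, mul_one]
      rw [h3]; exact Subgroup.mul_mem _ h1 h2
    have hrk : ∀ i : ZMod n, (r i : DihedralGroup n) ∈ Subgroup.closure S := by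
      intro i
      have : (r 1 : DihedralGroup n) ^ i.val = r i := by
        rw [r_one_pow, ZMod.natCast_val, ZMod.cast_id]
      exact this ▸ Subgroup.pow_mem _ hr1 i.val
    cases g with
    | r i => exact hrk i
    | sr i =>
        have : (sr 0 * r i : DihedralGroup n) = sr i := by
          rw [sr_mul_r, zero_add]
        exact this ▸ Subgroup.mul_mem _ h2 (hrk i)
  · intro i
    fin_cases i
    · show orderOf (r 1 * sr 0 : DihedralGroup n) = 2
      rw [r_mul_sr]; exact orderOf_sr _
    · show orderOf (r 1 * sr 0 : DihedralGroup n) = 2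
      rw [r_mul_sr]; exact orderOf_sr _
    · exact orderOf_sr _
    · show orderOf (sr 0 * (r 1 : DihedralGroup n) ^ (σ - 1)) = 2
      rw [hr, sr_mul_r]; exact orderOf_sr _
    · show orderOf ((r 1 : DihedralGroup n) ^ (σ - 1)) = 2
      rw [hr]
      refine orderOf_eq_prime ?_ ?_
      · rw [sq, r_mul_r, hsum, one_def]
      · rw [one_def]
        exact fun h => hcast (r.inj h)
  · simp only [List.ofFn_zero, List.prod_nil, one_mul]
    have key : (List.ofFn (![DihedralGroup.r 1 * DihedralGroup.sr 0,
        DihedralGroup.r 1 * DihedralGroup.sr 0,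
        DihedralGroup.sr 0,
        DihedralGroup.sr 0 * (DihedralGroup.r 1) ^ (σ - 1),
        (DihedralGroup.r 1) ^ (σ - 1)] :
        Fin ([2,2,2,2,2] : List ℕ).length → DihedralGroup n)).prod
        = r (((σ-1:ℕ) : ZMod n) + ((σ-1:ℕ) : ZMod n)) := by
      simp only [List.ofFn_succ, List.ofFn_zero, List.prod_cons, List.prod_nil, mul_one,
        Matrix.cons_val_zero, Matrix.cons_val_succ, hr]
      rw [r_mul_sr, sr_mul_r, sr_mul_r, sr_mul_sr, sr_mul_r, sr_mul_sr]
      congr 1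
      ring
    rw [key, hsum, one_def]

theorem dihedral_genVector_five_twos (σ : ℕ) (hσ : 2 ≤ σ) :
    Nat.card (DihedralGroup (2 * (σ - 1))) = 4 * (σ - 1) ∧
    IsGenVector (DihedralGroup (2 * (σ - 1))) 0 [2, 2, 2, 2, 2] ![] ![]
      ![DihedralGroup.r 1 * DihedralGroup.sr 0,
        DihedralGroup.r 1 * DihedralGroup.sr 0,
        DihedralGroup.sr 0,
        DihedralGroup.sr 0 * (DihedralGroup.r 1) ^ (σ - 1),
        (DihedralGroup.r 1) ^ (σ - 1)] ∧
    IsActualSignature σ 0 [2, 2, 2, 2, 2] := by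
  haveI : NeZero (2 * (σ - 1)) := ⟨by omega⟩
  have hcard : Nat.card (DihedralGroup (2 * (σ - 1))) = 4 * (σ - 1) := by
    rw [DihedralGroup.nat_card]; ring
  have hgen := dihedral_aux σ hσ
  have hRH : RHFormula σ (4 * (σ - 1)) 0 [2, 2, 2, 2, 2] := by
    unfold RHFormula
    have : ((σ - 1 : ℕ) : ℚ) = (σ : ℚ) - 1 := by
      push_cast [Nat.cast_sub (by omega : 1 ≤ σ)]; ring
    push_cast [Nat.cast_sub (by omega : 1 ≤ σ)]
    norm_num
    ring
  refine ⟨hcard, hgen, fun x hx => by fin_cases hx <;> norm_num,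
    DihedralGroup (2 * (σ - 1)), inferInstance, inferInstance,
    ⟨![], ![], _, hgen⟩, ?_⟩
  rw [DihedralGroup.card, show 2 * (2 * (σ - 1)) = 4 * (σ - 1) by ring]
  exact hRH
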